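/- Let K be a totally real number field with ring of integers O_K, and let S ⊆ O_K^× be a set of units such that the set {a ∈ K totally positive : Tr(a) ≤ Tr(a u²) for all u ∈ S} coincides with the reduction domain F_K = {a ∈ K totally positive : Tr(a) ≤ Tr(a v²) for all v ∈ O_K^×}. Then the subgroup of O_K^× generated by S together with −1 is all of O_K^×. -/

import Mathlib

open NumberField Module

/-- An element of a number field is totally positive if it is positive under
every real embedding. -/
def TotPos {K : Type*} [Field K] (a : K) : Prop := ∀ τ : K →+* ℝ, 0 < τ a

section Helpers
set_option linter.unusedSectionVars false

variable {K : Type*} [Field K] [NumberField K]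

lemma trace_coe_eq_sum (x : K) :
    ((Algebra.trace ℚ K x : ℚ) : ℂ) = ∑ φ : K →+* ℂ, φ x := by
  have h := trace_eq_sum_embeddings (K := ℚ) (L := K) (E := ℂ) (x := x)
  rw [show ((Algebra.trace ℚ K x : ℚ) : ℂ) = algebraMap ℚ ℂ (Algebra.trace ℚ K x) from rfl, h]
  exact (Fintype.sum_equiv (RingHom.equivRatAlgHom K ℂ) (fun φ => φ x) (fun σ => σ x)
    (fun φ => rfl)).symm

lemma ofReal_re_eq (htr : ∀ φ : K →+* ℂ, ∀ x : K, (φ x).im = 0) (φ : K →+* ℂ) (x : K) :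
    (((φ x).re : ℝ) : ℂ) = φ x := by
  apply Complex.ext <;> simp [htr φ x]

lemma trace_real (htr : ∀ φ : K →+* ℂ, ∀ x : K, (φ x).im = 0) (x : K) :
    ((Algebra.trace ℚ K x : ℚ) : ℝ) = ∑ φ : K →+* ℂ, (φ x).re := by
  have h : ((Algebra.trace ℚ K x : ℚ) : ℂ) = ((∑ φ : K →+* ℂ, (φ x).re : ℝ) : ℂ) := by
    rw [trace_coe_eq_sum x]
    push_cast
    exact Finset.sum_congr rfl fun φ _ => (ofReal_re_eq htr φ x).symm
  exact_mod_cast h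

lemma re_pos (htr : ∀ φ : K →+* ℂ, ∀ x : K, (φ x).im = 0) {x : K} (hx : TotPos x)
    (φ : K →+* ℂ) : 0 < (φ x).re := by
  have hre : ComplexEmbedding.IsReal φ := by
    rw [ComplexEmbedding.isReal_iff]; ext y
    exact Complex.conj_eq_iff_im.mpr (htr φ y)
  exact hx hre.embedding

lemma trace_pos (htr : ∀ φ : K →+* ℂ, ∀ x : K, (φ x).im = 0) {x : K} (hx : TotPos x) :
    0 < Algebra.trace ℚ K x := by
  have hne : Nonempty (K →+* ℂ) := by
    rw [← Fintype.card_pos_iff, Embeddings.card K ℂ]; exact finrank_pos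
  have h : (0:ℝ) < ((Algebra.trace ℚ K x : ℚ) : ℝ) := by
    rw [trace_real htr x]
    exact Finset.sum_pos (fun φ _ => re_pos htr hx φ) Finset.univ_nonempty
  exact_mod_cast h

lemma norm_coe_eq_prod (x : K) :
    ((Algebra.norm ℚ x : ℚ) : ℂ) = ∏ φ : K →+* ℂ, φ x := by
  have h := Algebra.norm_eq_prod_embeddings (K := ℚ) (E := ℂ) x
  rw [show ((Algebra.norm ℚ x : ℚ) : ℂ) = algebraMap ℚ ℂ (Algebra.norm ℚ x) from rfl, h]
  exact (Fintype.prod_equiv (RingHom.equivRatAlgHom K ℂ) (fun φ => φ x) (fun σ => σ x)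
    (fun φ => rfl)).symm

lemma unit_eq_one (htr : ∀ φ : K →+* ℂ, ∀ x : K, (φ x).im = 0) {x : K} (hx : TotPos x)
    (hnorm : |Algebra.norm ℚ x| = 1)
    (hle : Algebra.trace ℚ K x ≤ (finrank ℚ K : ℚ)) : x = 1 := by
  by_contra hne
  have hne' : Nonempty (K →+* ℂ) := by
    rw [← Fintype.card_pos_iff, Embeddings.card K ℂ]; exact finrank_pos
  obtain ⟨φ₀⟩ := hne'
  have hrpos : ∀ φ : K →+* ℂ, 0 < (φ x).re := re_pos htr hx
  -- product of real parts is the norm, which is 1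
  have hprod : ∏ φ : K →+* ℂ, (φ x).re = ((Algebra.norm ℚ x : ℚ) : ℝ) := by
    have h : ((∏ φ : K →+* ℂ, (φ x).re : ℝ) : ℂ) = ((Algebra.norm ℚ x : ℚ) : ℂ) := by
      rw [norm_coe_eq_prod x]
      push_cast
      exact Finset.prod_congr rfl fun φ _ => ofReal_re_eq htr φ x
    exact_mod_cast h
  have hnormpos : (0:ℝ) < ((Algebra.norm ℚ x : ℚ) : ℝ) := by
    rw [← hprod]; exact Finset.prod_pos fun φ _ => hrpos φ
  have hnorm1 : (Algebra.norm ℚ x : ℚ) = 1 := by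
    rcases abs_eq (by norm_num : (0:ℚ) ≤ 1) |>.mp hnorm with h | h
    · exact h
    · exfalso; rw [h] at hnormpos; norm_num at hnormpos
  have hprod1 : ∏ φ : K →+* ℂ, (φ x).re = 1 := by rw [hprod, hnorm1]; norm_num
  -- strict AM-GM via log
  have hlog : ∀ φ : K →+* ℂ, Real.log (φ x).re ≤ (φ x).re - 1 :=
    fun φ => Real.log_le_sub_one_of_pos (hrpos φ)
  have hx0 : (φ₀ x).re ≠ 1 := by
    intro h1
    apply hne
    apply φ₀.injective
    rw [← ofReal_re_eq htr φ₀ x, h1, map_one]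
    norm_num
  have hstrict : Real.log (φ₀ x).re < (φ₀ x).re - 1 :=
    Real.log_lt_sub_one_of_pos (hrpos φ₀) hx0
  have hsumlog : ∑ φ : K →+* ℂ, Real.log (φ x).re = 0 := by
    rw [← Real.log_prod (fun φ _ => ne_of_gt (hrpos φ)), hprod1, Real.log_one]
  have hlt : (0:ℝ) < ∑ φ : K →+* ℂ, ((φ x).re - 1) := by
    rw [← hsumlog]
    exact Finset.sum_lt_sum (fun φ _ => hlog φ) ⟨φ₀, Finset.mem_univ _, hstrict⟩
  have hsum : ∑ φ : K →+* ℂ, ((φ x).re - 1)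
      = (∑ φ : K →+* ℂ, (φ x).re) - (finrank ℚ K : ℝ) := by
    rw [Finset.sum_sub_distrib, Finset.sum_const, Finset.card_univ, Embeddings.card K ℂ]
    simp
  have htrace := trace_real htr x
  have hle' : ((Algebra.trace ℚ K x : ℚ) : ℝ) ≤ (finrank ℚ K : ℝ) := by exact_mod_cast hle
  rw [hsum] at hlt
  rw [htrace] at hle'
  linarith

lemma sq_totPos (v : (𝓞 K)ˣ) : TotPos ((((v^2 : (𝓞 K)ˣ) : 𝓞 K) : K)) := by
  intro τ
  have h : ((((v^2 : (𝓞 K)ˣ) : 𝓞 K) : K)) = (((v : 𝓞 K) : K))^2 := by push_cast; ring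
  rw [h, map_pow]
  have hne : (((v : 𝓞 K) : K)) ≠ 0 := by
    exact_mod_cast v.ne_zero
  exact pow_two_pos_of_ne_zero ((map_ne_zero τ).mpr hne)

end Helpers

theorem stmt11 (K : Type*) [Field K] [NumberField K]
    -- `K` is totally real
    (htr : ∀ φ : K →+* ℂ, ∀ x : K, (φ x).im = 0)
    (S : Set (𝓞 K)ˣ)
    -- the inequalities indexed by `S` cut out exactly the reduction domain `F_K`
    (hS : {a : K | TotPos a ∧ ∀ u ∈ S,
            Algebra.trace ℚ K a ≤ Algebra.trace ℚ K (a * ((u : 𝓞 K) : K) ^ 2)} =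
          {a : K | TotPos a ∧ ∀ v : (𝓞 K)ˣ,
            Algebra.trace ℚ K a ≤ Algebra.trace ℚ K (a * ((v : 𝓞 K) : K) ^ 2)}) :
    Subgroup.closure (S ∪ {-1}) = (⊤ : Subgroup (𝓞 K)ˣ) := by
  refine (Subgroup.eq_top_iff' _).mpr fun w => ?_

  set H := Subgroup.closure (S ∪ {-1}) with hH
  have hSH : ∀ u ∈ S, u ∈ H := fun u hu => Subgroup.subset_closure (Or.inl hu)
  have hneg : (-1 : (𝓞 K)ˣ) ∈ H := Subgroup.subset_closure (Or.inr rfl)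
  -- integer-valued trace of the orbit elements
  set f : (𝓞 K)ˣ → ℤ := fun v => Algebra.intTrace ℤ (𝓞 K) (((w⁻¹ * v)^2 : (𝓞 K)ˣ) : 𝓞 K)
    with hf
  have hfq : ∀ v : (𝓞 K)ˣ, (f v : ℚ)
      = Algebra.trace ℚ K ((((w⁻¹ * v)^2 : (𝓞 K)ˣ) : 𝓞 K) : K) := fun v =>
    Algebra.algebraMap_intTrace (A := ℤ) (K := ℚ) (L := K) (B := 𝓞 K) _
  have hfpos : ∀ v : (𝓞 K)ˣ, 0 ≤ f v := by
    intro v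
    have h := trace_pos htr (sq_totPos (w⁻¹ * v))
    rw [← hfq v] at h
    exact_mod_cast le_of_lt h
  obtain ⟨t₀, ⟨u₀, hu₀H, hu₀t⟩, hmin⟩ :=
    Int.exists_least_of_bdd (P := fun t => ∃ u, u ∈ H ∧ f u = t)
      ⟨0, fun t ⟨u, _, hut⟩ => hut ▸ hfpos u⟩ ⟨f 1, 1, one_mem H, rfl⟩
  have hminf : ∀ u, u ∈ H → f u₀ ≤ f u := fun u hu => hu₀t ▸ hmin (f u) ⟨u, hu, rfl⟩
  set a : K := ((((w⁻¹ * u₀)^2 : (𝓞 K)ˣ) : 𝓞 K) : K) with ha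
  have hmem : a ∈ {a : K | TotPos a ∧ ∀ u ∈ S,
      Algebra.trace ℚ K a ≤ Algebra.trace ℚ K (a * ((u : 𝓞 K) : K) ^ 2)} := by
    refine ⟨sq_totPos _, fun u hu => ?_⟩
    have hco : a * (((u : 𝓞 K) : K))^2
        = ((((w⁻¹ * (u₀ * u))^2 : (𝓞 K)ˣ) : 𝓞 K) : K) := by
      rw [ha]; push_cast; ring
    rw [hco, ← hfq u₀, ← hfq (u₀ * u)]
    exact_mod_cast hminf (u₀ * u) (mul_mem hu₀H (hSH u hu))
  rw [hS] at hmem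
  have hle := hmem.2 (w * u₀⁻¹)
  have hone : a * ((((w * u₀⁻¹ : (𝓞 K)ˣ) : 𝓞 K) : K))^2 = 1 := by
    have hunit : ((w⁻¹ * u₀)^2) * ((w * u₀⁻¹)^2) = (1 : (𝓞 K)ˣ) := by
      rw [← mul_pow, show w⁻¹ * u₀ * (w * u₀⁻¹) = 1 by simp [mul_mul_mul_comm], one_pow]
    calc a * ((((w * u₀⁻¹ : (𝓞 K)ˣ) : 𝓞 K) : K))^2
        = (((((w⁻¹ * u₀)^2) * ((w * u₀⁻¹)^2) : (𝓞 K)ˣ) : 𝓞 K) : K) := by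
          rw [ha]; push_cast; ring
      _ = 1 := by rw [hunit]; push_cast; ring
  rw [hone] at hle
  have htr1 : Algebra.trace ℚ K (1 : K) = (finrank ℚ K : ℚ) := by
    rw [show (1 : K) = algebraMap ℚ K 1 from (map_one _).symm, Algebra.trace_algebraMap]
    simp
  rw [htr1] at hle
  have hnorm : |Algebra.norm ℚ a| = 1 := by
    have h := NumberField.isUnit_iff_norm.mp ((w⁻¹ * u₀)^2).isUnit
    rwa [RingOfIntegers.coe_norm] at h
  have haone : a = 1 := unit_eq_one htr (sq_totPos _) hnorm hle
  -- now deduce membership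
  have hsq : ((w⁻¹ * u₀ : (𝓞 K)ˣ) : 𝓞 K) * ((w⁻¹ * u₀ : (𝓞 K)ˣ) : 𝓞 K) = 1 := by
    have : ((((w⁻¹ * u₀)^2 : (𝓞 K)ˣ) : 𝓞 K) : K) = 1 := haone
    have h2 : (((w⁻¹ * u₀)^2 : (𝓞 K)ˣ) : 𝓞 K) = 1 := by exact_mod_cast this
    rw [← h2]; push_cast; ring
  rcases mul_self_eq_one_iff.mp hsq with h | h
  · have : w⁻¹ * u₀ = 1 := Units.ext h
    have hw : w = u₀ := by
      rwa [inv_mul_eq_one] at this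
    rw [hw]; exact hu₀H
  · have : w⁻¹ * u₀ = -1 := Units.ext (by rw [h]; simp)
    have hw : w = u₀ * (-1 : (𝓞 K)ˣ)⁻¹ := by
      rw [← this]; group
    rw [hw]; exact mul_mem hu₀H (inv_mem hneg)
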